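/- arXiv:1304.7751 — 2 statements merged into one kernel-verified Lean document; each statement's English description precedes it below -/
import Mathlib

section
/- Consider the discrete-time sparse vector channel with channel-independent sampling: let 1 ≤ k ≤ m ≤ n be integers, let H be an n×n real diagonal matrix with all diagonal entries H_ii nonzero, let P > 0, set c := P/k and SNR_min := c · min_{1≤i≤n} H_ii². Let Q be any m×n real matrix such that Q Qᵀ is invertible, and set Q^w := (Q Qᵀ)^{−1/2} Q, where (Q Qᵀ)^{−1/2} is the inverse of the positive-definite square root of Q Qᵀ. For a k-element subset s of {1,…,n}, let H_s be the k×k diagonal matrix with diagonal entries H_ii for i ∈ s, let Q^w_s be the m×k submatrix of Q^w consisting of its columns indexed by s, and define the sampled capacity loss L_s := (1/2)·log det(I_k + c·H_s²) − (1/2)·log det(I_m + c·Q^w_s H_s² (Q^w_s)ᵀ). Then the maximum of L_s over all k-element subsets s of {1,…,n} is at least (n/2)·( H(k/n) − (m/n)·H(k/m) − 2/√SNR_min − log(n+1)/n ). -/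
open Matrix Finset

/-- The `m × k` submatrix of an `m × n` real matrix `B` consisting of the columns of `B`
indexed by the subset `s`. -/
def colSubmatrix {m n : ℕ} (B : Matrix (Fin m) (Fin n) ℝ) (s : Finset (Fin n)) :
    Matrix (Fin m) {j // j ∈ s} ℝ :=
  Matrix.of fun i j => B i (j : Fin n)

/-- Binary entropy function `H(x) = -x log x - (1-x) log (1-x)`
(with `H 0 = H 1 = 0`, since `Real.log 0 = 0`). -/
noncomputable def binEntropy (x : ℝ) : ℝ :=
  -x * Real.log x - (1 - x) * Real.log (1 - x)

lemma posSemidef_mul_transpose_self {m n : ℕ} (Q : Matrix (Fin m) (Fin n) ℝ) :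
    (Q * Qᵀ).PosSemidef := by
  rw [← Matrix.conjTranspose_eq_transpose_of_trivial Q]
  exact Matrix.posSemidef_self_mul_conjTranspose Q

/-- The whitened matrix `Q^w := (Q Qᵀ)^{-1/2} Q`, where `(Q Qᵀ)^{-1/2}` is the inverse of
the positive-semidefinite square root of `Q Qᵀ`. -/
noncomputable def posSemidefSqrt {m : ℕ} {A : Matrix (Fin m) (Fin m) ℝ} (hA : A.PosSemidef) :
    Matrix (Fin m) (Fin m) ℝ :=
  hA.1.eigenvectorUnitary.1 * diagonal ((↑) ∘ (√·) ∘ hA.1.eigenvalues) *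
    (star hA.1.eigenvectorUnitary : Matrix (Fin m) (Fin m) ℝ)

noncomputable def whiten {m n : ℕ} (Q : Matrix (Fin m) (Fin n) ℝ) :
    Matrix (Fin m) (Fin n) ℝ :=
  (posSemidefSqrt (posSemidef_mul_transpose_self Q))⁻¹ * Q

lemma det_piecewise_one {ι : Type*} [Fintype ι] [DecidableEq ι] (A : Matrix ι ι ℝ) (s : Finset ι) :
    Matrix.det (s.piecewise A (1 : Matrix ι ι ℝ))
      = Matrix.det (A.submatrix (fun i : {j // j ∈ s} => (i : ι)) (fun i => (i : ι))) := by
  classical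
  let e : {j // j ∈ s} ⊕ {j // j ∉ s} ≃ ι := Equiv.sumCompl (· ∈ s)
  show Matrix.det (Matrix.of (s.piecewise (A : ι → ι → ℝ) (1 : Matrix ι ι ℝ))) = _
  rw [← Matrix.det_submatrix_equiv_self e]
  have hB : Matrix.submatrix (Matrix.of (s.piecewise (A : ι → ι → ℝ) (1 : Matrix ι ι ℝ))) e e =
      Matrix.fromBlocks
        (A.submatrix (fun i : {j // j ∈ s} => (i : ι)) (fun i : {j // j ∈ s} => (i : ι)))
        (A.submatrix (fun i : {j // j ∈ s} => (i : ι)) (fun i : {j // j ∉ s} => (i : ι)))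
        0 1 := by
    ext i j
    rcases i with i | i <;> rcases j with j | j
    · simp [e, Finset.piecewise, i.2]
    · simp [e, Finset.piecewise, i.2]
    · have hne : (i : ι) ≠ (j : ι) := fun h => i.2 (h ▸ j.2)
      simp [e, Finset.piecewise, i.2, Matrix.one_apply, hne]
    · simp [e, Finset.piecewise, i.2, Matrix.one_apply, Subtype.ext_iff]
  rw [hB, Matrix.det_fromBlocks_zero₂₁, Matrix.det_one, mul_one]

noncomputable def pminor {ι : Type*} [DecidableEq ι] (A : Matrix ι ι ℝ) (t : Finset ι) : ℝ :=
  Matrix.det (A.submatrix (fun i : {j // j ∈ t} => (i : ι)) (fun i => (i : ι)))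

lemma det_add_diagonal {ι : Type*} [Fintype ι] [DecidableEq ι] (A : Matrix ι ι ℝ) (d : ι → ℝ) :
    Matrix.det (A + Matrix.diagonal d)
      = ∑ t : Finset ι, (∏ i ∈ tᶜ, d i) * pminor A t := by
  classical
  have h0 : Matrix.det (A + Matrix.diagonal d)
      = (Matrix.detRowAlternating (R := ℝ) (n := ι)).toMultilinearMap
          ((A : ι → ι → ℝ) + (Matrix.diagonal d : ι → ι → ℝ)) := rfl
  rw [h0]
  erw [MultilinearMap.map_add_univ]
  apply Finset.sum_congr rfl
  intro t _
  have hrow : (t.piecewise (A : ι → ι → ℝ) (Matrix.diagonal d : ι → ι → ℝ))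
      = fun i => (if i ∈ t then (1:ℝ) else d i) • (t.piecewise (A : ι → ι → ℝ) (1 : Matrix ι ι ℝ)) i := by
    funext i
    by_cases h : i ∈ t
    · simp [Finset.piecewise, h]
    · funext j
      simp only [Finset.piecewise, if_neg h, Pi.smul_apply, smul_eq_mul]
      rw [Matrix.diagonal_apply, Matrix.one_apply]
      split <;> simp
  rw [hrow, MultilinearMap.map_smul_univ]
  have hprod : (∏ i, (if i ∈ t then (1:ℝ) else d i)) = ∏ i ∈ tᶜ, d i := by
    rw [← Finset.prod_mul_prod_compl t]
    rw [Finset.prod_congr rfl (fun i hi => if_pos hi), Finset.prod_congr rfl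
      (fun i hi => if_neg (Finset.mem_compl.mp hi)), Finset.prod_const_one, one_mul]
  rw [hprod, smul_eq_mul]
  congr 1
  exact det_piecewise_one A t

lemma det_submatrix_add_diagonal {ι : Type*} [Fintype ι] [DecidableEq ι]
    (A : Matrix ι ι ℝ) (d : ι → ℝ) (s : Finset ι) :
    Matrix.det ((A + Matrix.diagonal d).submatrix
        (fun i : {j // j ∈ s} => (i : ι)) (fun i => (i : ι)))
      = ∑ t ∈ s.powerset, (∏ i ∈ s \ t, d i) * pminor A t := by
  classical
  set c : {j // j ∈ s} → ι := fun i => (i : ι) with hc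
  have hsub : (A + Matrix.diagonal d).submatrix c c
      = A.submatrix c c + Matrix.diagonal (fun i : {j // j ∈ s} => d (i : ι)) := by
    ext i j
    by_cases h : i = j
    · subst h; simp [Matrix.diagonal_apply, c]
    · have : (i : ι) ≠ (j : ι) := fun hh => h (Subtype.ext hh)
      simp [Matrix.diagonal_apply, this, h, c]
  rw [hsub, det_add_diagonal]
  -- reindex sum over Finset {j // j ∈ s} to sum over t ∈ s.powerset
  refine Finset.sum_bij' (fun t' _ => t'.map (Function.Embedding.subtype (· ∈ s)))
    (fun t _ => t.subtype (· ∈ s)) ?_ ?_ ?_ ?_ ?_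
  · intro t' _
    simp only [Finset.mem_powerset]
    intro x hx
    obtain ⟨y, _, rfl⟩ := Finset.mem_map.mp hx
    exact y.2
  · intro t _; exact Finset.mem_univ _
  · intro t' _
    ext x
    simp [Finset.mem_subtype, Finset.mem_map, Function.Embedding.subtype, Subtype.ext_iff,
      Function.Embedding.coeFn_mk]
    exact ⟨fun ⟨_, _, h, e⟩ => by subst e; exact h, fun h => ⟨_, _, h, rfl⟩⟩
  · intro t ht
    rw [Finset.subtype_map]
    exact Finset.filter_true_of_mem (fun x hx => Finset.mem_powerset.mp ht hx)
  · intro t' _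
    set t := t'.map (Function.Embedding.subtype (· ∈ s)) with hts
    have hmem : ∀ x : ι, x ∈ t ↔ ∃ h : x ∈ s, (⟨x, h⟩ : {j // j ∈ s}) ∈ t' := by
      intro x
      constructor
      · intro hx
        obtain ⟨y, hy, rfl⟩ := Finset.mem_map.mp hx
        exact ⟨y.2, by simpa using hy⟩
      · rintro ⟨h, hx⟩
        exact Finset.mem_map.mpr ⟨⟨x, h⟩, hx, rfl⟩
    have htsub : t ⊆ s := by
      intro x hx; obtain ⟨h, _⟩ := (hmem x).mp hx; exact h
    congr 1
    · -- products equal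
      rw [show s \ t = t'ᶜ.map (Function.Embedding.subtype (· ∈ s)) from ?_, Finset.prod_map]
      · rfl
      · ext x
        simp only [Finset.mem_sdiff, Finset.mem_map, Finset.mem_compl,
          Function.Embedding.coe_subtype]
        constructor
        · rintro ⟨hxs, hxt⟩
          exact ⟨⟨x, hxs⟩, fun hmm => hxt ((hmem x).mpr ⟨hxs, hmm⟩), rfl⟩
        · rintro ⟨y, hy, rfl⟩
          exact ⟨y.2, fun hx => hy (by obtain ⟨h, h2⟩ := (hmem y).mp hx; simpa using h2)⟩
    · -- minors equal
      unfold pminor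
      let e : {x : {j // j ∈ s} // x ∈ t'} ≃ {i : ι // i ∈ t} :=
        { toFun := fun x => ⟨(x : {j // j ∈ s}), (hmem _).mpr ⟨(x : {j // j ∈ s}).2, by simpa using x.2⟩⟩
          invFun := fun i => ⟨⟨(i : ι), htsub i.2⟩, by
            obtain ⟨h, hx⟩ := (hmem (i : ι)).mp i.2; exact hx⟩
          left_inv := fun x => by ext; rfl
          right_inv := fun i => by ext; rfl }
      have h1 : (A.submatrix c c).submatrix
            (fun i : {x : {j // j ∈ s} // x ∈ t'} => (i : {j // j ∈ s}))
            (fun i : {x : {j // j ∈ s} // x ∈ t'} => (i : {j // j ∈ s}))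
          = (A.submatrix (fun i : {j // j ∈ t} => (i : ι))
              (fun i : {j // j ∈ t} => (i : ι))).submatrix e e := by
        ext i j; rfl
      rw [h1, Matrix.det_submatrix_equiv_self]

lemma whiten_mul_transpose {m n : ℕ} (Q : Matrix (Fin m) (Fin n) ℝ)
    (hQ : IsUnit (Q * Qᵀ)) : whiten Q * (whiten Q)ᵀ = 1 := by
  set S := posSemidefSqrt (posSemidef_mul_transpose_self Q) with hS
  have hSS : S * S = Q * Qᵀ := by
    set hA := posSemidef_mul_transpose_self Q
    have hUU : (star hA.1.eigenvectorUnitary : Matrix (Fin m) (Fin m) ℝ) *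
        hA.1.eigenvectorUnitary.1 = 1 :=
      Unitary.star_mul_self_of_mem hA.1.eigenvectorUnitary.2
    have hDD : diagonal (((↑) ∘ (√·) ∘ hA.1.eigenvalues) : Fin m → ℝ) *
        diagonal (((↑) ∘ (√·) ∘ hA.1.eigenvalues) : Fin m → ℝ)
        = diagonal (RCLike.ofReal ∘ hA.1.eigenvalues : Fin m → ℝ) := by
      rw [diagonal_mul_diagonal]; congr 1; funext i
      simp [Real.mul_self_sqrt (hA.eigenvalues_nonneg i)]
    have hspec := hA.1.spectral_theorem
    rw [Unitary.conjStarAlgAut_apply] at hspec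
    conv_rhs => rw [hspec]
    rw [hS, posSemidefSqrt]
    simp only [Matrix.mul_assoc]
    rw [← Matrix.mul_assoc (star _ : Matrix (Fin m) (Fin m) ℝ) hA.1.eigenvectorUnitary.1, hUU,
      Matrix.one_mul, ← Matrix.mul_assoc (diagonal _) (diagonal _), hDD]
  have hSym : Sᵀ = S := by
    rw [hS, posSemidefSqrt, Matrix.transpose_mul, Matrix.transpose_mul,
      Matrix.diagonal_transpose, Matrix.star_eq_conjTranspose,
      Matrix.conjTranspose_eq_transpose_of_trivial, Matrix.transpose_transpose, Matrix.mul_assoc]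
  have hdet : IsUnit S.det := by
    have h2 : IsUnit (S.det * S.det) := by
      rw [← Matrix.det_mul, hSS]
      exact (Matrix.isUnit_iff_isUnit_det _).mp hQ
    exact isUnit_of_mul_isUnit_left h2
  have h1 : whiten Q * (whiten Q)ᵀ = S⁻¹ * (Q * Qᵀ) * S⁻¹ := by
    unfold whiten
    rw [Matrix.transpose_mul, Matrix.transpose_nonsing_inv, hSym]
    rw [← hS, Matrix.mul_assoc, Matrix.mul_assoc, Matrix.mul_assoc]
  rw [h1, ← hSS, ← Matrix.mul_assoc, Matrix.mul_assoc (S⁻¹ * S),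
    Matrix.mul_nonsing_inv _ hdet, Matrix.nonsing_inv_mul _ hdet, Matrix.mul_one]

lemma det_gram_add_smul {m n : ℕ} (hmn : m ≤ n) (W : Matrix (Fin m) (Fin n) ℝ)
    (hW : W * Wᵀ = 1) {x : ℝ} (hx : 0 < x) :
    (Wᵀ * W + x • 1).det = x ^ (n - m) * (1 + x) ^ m := by
  have hx' : x ≠ 0 := ne_of_gt hx
  have h1 : Wᵀ * W + x • 1 = x • ((1 : Matrix (Fin n) (Fin n) ℝ) + Wᵀ * (x⁻¹ • W)) := by
    rw [Matrix.mul_smul, smul_add, smul_smul, mul_inv_cancel₀ hx', one_smul, add_comm]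
  rw [h1, Matrix.det_smul, Matrix.det_one_add_mul_comm, Matrix.smul_mul, hW]
  have h2 : (1 : Matrix (Fin m) (Fin m) ℝ) + x⁻¹ • 1 = (1 + x⁻¹) • 1 := by
    rw [add_smul, one_smul]
  rw [h2, Matrix.det_smul, Matrix.det_one, mul_one, Fintype.card_fin, Fintype.card_fin]
  have hxn : x ^ n = x ^ (n - m) * x ^ m := by
    rw [← pow_add]; congr 1; omega
  rw [hxn, mul_assoc, ← mul_pow]
  congr 2
  field_simp
  ring

lemma nat_center_max (n k : ℕ) (hk : 1 ≤ k) (hkn : k < n) :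
    n ^ n ≤ (n + 1) * (n.choose k * k ^ k * (n - k) ^ (n - k)) := by
  set F : ℕ → ℕ := fun j => n.choose j * k ^ j * (n - k) ^ (n - j) with hF
  have hsum : ∑ j ∈ Finset.range (n + 1), F j = n ^ n := by
    have h := add_pow k (n - k) n
    rw [Nat.add_sub_cancel' hkn.le] at h
    rw [show n ^ n = (n:ℕ) ^ n from rfl, h]
    apply Finset.sum_congr rfl
    intro j _
    simp [hF]; ring
  have hup : ∀ j, j < k → F j ≤ F (j + 1) := by
    intro j hj
    have hjn : j < n := lt_of_lt_of_le hj hkn.le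
    have hsplit : n - j = (n - (j+1)) + 1 := by omega
    have key : n.choose j * (n - k) * (j + 1) ≤ n.choose (j + 1) * k * (j + 1) := by
      have hc : n.choose (j + 1) * (j + 1) = n.choose j * (n - j) :=
        Nat.choose_succ_right_eq n j
      calc n.choose j * (n - k) * (j + 1)
          = n.choose j * ((n - k) * (j + 1)) := by ring
        _ ≤ n.choose j * ((n - j) * k) := by
            apply Nat.mul_le_mul_left
            exact Nat.mul_le_mul (by omega) (by omega)
        _ = n.choose j * (n - j) * k := by ring
        _ = n.choose (j + 1) * (j + 1) * k := by rw [← hc]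
        _ = n.choose (j + 1) * k * (j + 1) := by ring
    have key2 : n.choose j * (n - k) ≤ n.choose (j + 1) * k :=
      Nat.le_of_mul_le_mul_right key (by omega)
    calc F j = n.choose j * (n - k) * (k ^ j * (n - k) ^ (n - (j+1))) := by
          simp only [hF]; rw [hsplit]; ring
      _ ≤ n.choose (j + 1) * k * (k ^ j * (n - k) ^ (n - (j+1))) :=
          Nat.mul_le_mul_right _ key2
      _ = F (j + 1) := by simp only [hF]; rw [pow_succ]; ring
  have hdown : ∀ j, k ≤ j → F (j + 1) ≤ F j := by
    intro j hj
    by_cases hjn : j < n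
    · have hsplit : n - j = (n - (j+1)) + 1 := by omega
      have key : n.choose (j + 1) * k * (j + 1) ≤ n.choose j * (n - k) * (j + 1) := by
        have hc : n.choose (j + 1) * (j + 1) = n.choose j * (n - j) :=
          Nat.choose_succ_right_eq n j
        calc n.choose (j + 1) * k * (j + 1)
            = n.choose (j + 1) * (j + 1) * k := by ring
          _ = n.choose j * (n - j) * k := by rw [hc]
          _ = n.choose j * ((n - j) * k) := by ring
          _ ≤ n.choose j * ((n - k) * (j + 1)) := by
              apply Nat.mul_le_mul_left
              exact Nat.mul_le_mul (by omega) (by omega)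
          _ = n.choose j * (n - k) * (j + 1) := by ring
      have key2 : n.choose (j + 1) * k ≤ n.choose j * (n - k) :=
        Nat.le_of_mul_le_mul_right key (by omega)
      calc F (j + 1) = n.choose (j + 1) * k * (k ^ j * (n - k) ^ (n - (j+1))) := by
            simp only [hF]; rw [pow_succ]; ring
        _ ≤ n.choose j * (n - k) * (k ^ j * (n - k) ^ (n - (j+1))) :=
            Nat.mul_le_mul_right _ key2
        _ = F j := by simp only [hF]; rw [hsplit]; ring
    · have : n.choose (j + 1) = 0 := Nat.choose_eq_zero_of_lt (by omega)
      simp [hF, this]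
  have hle : ∀ d j, j + d = k → F j ≤ F k := by
    intro d
    induction d with
    | zero => intro j hj; simp only [Nat.add_zero] at hj; rw [hj]
    | succ d ih =>
        intro j hj
        calc F j ≤ F (j + 1) := hup j (by omega)
          _ ≤ F k := ih (j + 1) (by omega)
  have hge : ∀ j, k ≤ j → F j ≤ F k := by
    intro j hj
    induction j, hj using Nat.le_induction with
    | base => exact le_refl _
    | succ j hj ih => exact le_trans (hdown j hj) ih
  calc n ^ n = ∑ j ∈ Finset.range (n + 1), F j := hsum.symm
    _ ≤ (Finset.range (n + 1)).card • F k := by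
        apply Finset.sum_le_card_nsmul
        intro j _
        rcases le_total j k with h | h
        · exact hle (k - j) j (by omega)
        · exact hge j h
    _ = (n + 1) * F k := by rw [Finset.card_range, smul_eq_mul]
    _ = (n + 1) * (n.choose k * k ^ k * (n - k) ^ (n - k)) := rfl

lemma n_binEntropy_le (n k : ℕ) (hk : 1 ≤ k) (hkn : k ≤ n) :
    (n : ℝ) * binEntropy ((k : ℝ) / n) ≤ Real.log (n + 1) + Real.log (n.choose k) := by
  have hn0 : (0:ℝ) < n := by
    have : 1 ≤ n := le_trans hk hkn
    exact_mod_cast Nat.lt_of_lt_of_le Nat.zero_lt_one this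
  rcases eq_or_lt_of_le hkn with rfl | hlt
  · have h1 : (k : ℝ) / k = 1 := div_self (ne_of_gt (by exact_mod_cast hk))
    rw [h1]
    have : binEntropy 1 = 0 := by simp [binEntropy]
    rw [this, mul_zero, Nat.choose_self]
    simp only [Nat.cast_one, Real.log_one, add_zero]
    exact Real.log_nonneg (by exact_mod_cast Nat.le_add_left 1 k)
  · -- k < n
    have hk0 : (0:ℝ) < k := by exact_mod_cast hk
    have hnk0 : (0:ℝ) < ((n - k : ℕ) : ℝ) := by
      have : 1 ≤ n - k := by omega
      exact_mod_cast this
    have hcast : ((n - k : ℕ) : ℝ) = (n : ℝ) - k := by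
      push_cast [Nat.cast_sub hkn]; ring
    have hC0 : (0:ℝ) < (n.choose k : ℝ) := by exact_mod_cast Nat.choose_pos hkn
    -- entropy expansion
    have he : (n : ℝ) * binEntropy ((k : ℝ) / n)
        = (n : ℝ) * Real.log n - (k : ℝ) * Real.log k
          - ((n - k : ℕ) : ℝ) * Real.log ((n - k : ℕ) : ℝ) := by
      unfold binEntropy
      have h1 : 1 - (k : ℝ) / n = ((n - k : ℕ) : ℝ) / n := by
        rw [hcast]; field_simp
      rw [h1, Real.log_div (ne_of_gt hk0) (ne_of_gt hn0),
        Real.log_div (ne_of_gt hnk0) (ne_of_gt hn0)]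
      have hsum : (k : ℝ) + ((n - k : ℕ) : ℝ) = n := by rw [hcast]; ring
      field_simp
      linear_combination Real.log (n : ℝ) * hsum
    -- the combinatorial bound
    have hnat := nat_center_max n k hk hlt
    have hreal : (n : ℝ) ^ n ≤ ((n : ℝ) + 1) *
        ((n.choose k : ℝ) * (k : ℝ) ^ k * ((n - k : ℕ) : ℝ) ^ (n - k)) := by
      exact_mod_cast hnat
    have hlog := Real.log_le_log (by positivity) hreal
    rw [Real.log_pow, Real.log_mul (by positivity) (by positivity),
      Real.log_mul (by positivity) (by positivity),
      Real.log_mul (by positivity) (by positivity),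
      Real.log_pow, Real.log_pow] at hlog
    have hsub : ((n - k : ℕ) : ℝ) * Real.log ((n - k : ℕ) : ℝ)
        = ((n - k : ℕ) : ℕ) • Real.log ((n - k : ℕ) : ℝ) := by
      rw [nsmul_eq_mul]
    rw [he]
    have hnn : ((n - k : ℕ) : ℝ) = ((n - k : ℕ) : ℝ) := rfl
    -- hlog : n * log n ≤ log (n+1) + (log C + k * log k) + (n-k) * log (n-k)
    push_cast at hlog ⊢
    nlinarith [hlog]

lemma analytic_bound (n m k : ℕ) (hk : 1 ≤ k) (hkm : k ≤ m) (hmn : m ≤ n)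
    {u : ℝ} (hu : 0 < u) :
    (n : ℝ) * u ^ 2 / (((m : ℝ) - k) / k + u)
        + ((n - m : ℕ) : ℝ) * Real.log (((m : ℝ) - k) / k + u)
        + (m : ℝ) * Real.log (1 + (((m : ℝ) - k) / k + u))
        - ((n - k : ℕ) : ℝ) * Real.log (((m : ℝ) - k) / k + u)
      ≤ (m : ℝ) * binEntropy ((k : ℝ) / m) + 2 * n * u := by
  have hk0 : (0:ℝ) < k := by exact_mod_cast hk
  have hm0 : (0:ℝ) < m := lt_of_lt_of_le hk0 (by exact_mod_cast hkm)
  have hn0 : (0:ℝ) < n := lt_of_lt_of_le hm0 (by exact_mod_cast hmn)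
  set a : ℝ := ((m : ℝ) - k) / k with ha
  have ha0 : 0 ≤ a := div_nonneg (sub_nonneg.mpr (by exact_mod_cast hkm)) hk0.le
  set x : ℝ := a + u with hx
  have hx0 : 0 < x := lt_of_lt_of_le hu (by rw [hx]; linarith)
  -- term 1
  have t1 : (n : ℝ) * u ^ 2 / x ≤ (n : ℝ) * u := by
    rw [div_le_iff₀ hx0]
    have hux : u ≤ x := by rw [hx]; linarith
    calc (n : ℝ) * u ^ 2 = (n * u) * u := by ring
      _ ≤ (n * u) * x := mul_le_mul_of_nonneg_left hux (by positivity)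
      _ = n * u * x := rfl
  -- cast combination: (n-m) - (n-k) = k - m
  have hcast : ((n - m : ℕ) : ℝ) - ((n - k : ℕ) : ℝ) = (k : ℝ) - m := by
    rw [Nat.cast_sub hmn, Nat.cast_sub (le_trans hkm hmn)]; ring
  have hmain : (m : ℝ) * Real.log (1 + x) - ((m : ℝ) - k) * Real.log x
      ≤ (m : ℝ) * binEntropy ((k : ℝ) / m) + (n : ℝ) * u := by
    rcases eq_or_lt_of_le hkm with rfl | hlt
    · -- k = m
      have hE : binEntropy ((k : ℝ) / k) = 0 := by
        rw [div_self (ne_of_gt hk0)]; simp [binEntropy]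
      have hxu : x = u := by rw [hx, ha, sub_self, zero_div, zero_add]
      have hlog : Real.log (1 + x) ≤ x := by
        have := Real.log_le_sub_one_of_pos (show (0:ℝ) < 1 + x by linarith)
        linarith
      rw [hE, sub_self, zero_mul, sub_zero, mul_zero, zero_add]
      calc (k : ℝ) * Real.log (1 + x) ≤ (k : ℝ) * x := mul_le_mul_of_nonneg_left hlog hk0.le
        _ = (k : ℝ) * u := by rw [hxu]
        _ ≤ (n : ℝ) * u := mul_le_mul_of_nonneg_right (by exact_mod_cast le_trans hkm hmn) hu.le
    · -- k < m
      have hmk0 : (0:ℝ) < (m : ℝ) - k := by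
        have : (k:ℝ) < m := by exact_mod_cast hlt
        linarith
      have ha0' : 0 < a := div_pos hmk0 hk0
      have h1a : 1 + a = (m : ℝ) / k := by rw [ha]; field_simp; ring
      -- key1 : m * binEntropy (k/m) = m * log (1+a) - (m-k) * log a
      have key1 : (m : ℝ) * binEntropy ((k : ℝ) / m)
          = (m : ℝ) * Real.log (1 + a) - ((m : ℝ) - k) * Real.log a := by
        unfold binEntropy
        have h2 : 1 - (k : ℝ) / m = ((m : ℝ) - k) / m := by field_simp
        rw [h2, h1a, ha, Real.log_div (ne_of_gt hk0) (ne_of_gt hm0),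
          Real.log_div (ne_of_gt hmk0) (ne_of_gt hm0),
          Real.log_div (ne_of_gt hm0) (ne_of_gt hk0),
          Real.log_div (ne_of_gt hmk0) (ne_of_gt hk0)]
        field_simp
        ring
      -- key2 : log (1+x) ≤ log (1+a) + u
      have key2 : Real.log (1 + x) ≤ Real.log (1 + a) + u := by
        have hpos : (0:ℝ) < (1 + x) / (1 + a) := by positivity
        have hlog := Real.log_le_sub_one_of_pos hpos
        rw [Real.log_div (by linarith) (by linarith)] at hlog
        have : (1 + x) / (1 + a) - 1 = u / (1 + a) := by
          rw [hx]; field_simp; ring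
        rw [this] at hlog
        have : u / (1 + a) ≤ u := by
          apply div_le_self hu.le; linarith
        linarith
      -- key3 : log a ≤ log x
      have key3 : Real.log a ≤ Real.log x := by
        apply Real.log_le_log ha0'
        rw [hx]; linarith
      have hmu : (m : ℝ) * u ≤ (n : ℝ) * u :=
        mul_le_mul_of_nonneg_right (by exact_mod_cast hmn) hu.le
      calc (m : ℝ) * Real.log (1 + x) - ((m : ℝ) - k) * Real.log x
          ≤ (m : ℝ) * (Real.log (1 + a) + u) - ((m : ℝ) - k) * Real.log a := by
            have := mul_le_mul_of_nonneg_left key2 hm0.le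
            have := mul_le_mul_of_nonneg_left key3 hmk0.le
            nlinarith
        _ = (m : ℝ) * binEntropy ((k : ℝ) / m) + (m : ℝ) * u := by rw [key1]; ring
        _ ≤ (m : ℝ) * binEntropy ((k : ℝ) / m) + (n : ℝ) * u := by linarith
  have hcomb : ((n - m : ℕ) : ℝ) * Real.log x - ((n - k : ℕ) : ℝ) * Real.log x
      = -(((m : ℝ) - k) * Real.log x) := by
    rw [← sub_mul, hcast]; ring
  nlinarith [hmain, t1, hcomb]

lemma capacity_loss_lower {n m : ℕ} (H : Matrix (Fin n) (Fin n) ℝ)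
    (hHdiag : ∀ i j, i ≠ j → H i j = 0) (hHne : ∀ i, H i i ≠ 0)
    {c : ℝ} (hc : 0 < c) (W : Matrix (Fin m) (Fin n) ℝ) (s : Finset (Fin n)) :
    0 < (((Wᵀ * W + Matrix.diagonal (fun i => (c * H i i ^ 2)⁻¹)).submatrix
          (fun i : {j // j ∈ s} => (i : Fin n)) (fun i : {j // j ∈ s} => (i : Fin n))).det)
    ∧ -(1/2 : ℝ) * Real.log
        (((Wᵀ * W + Matrix.diagonal (fun i => (c * H i i ^ 2)⁻¹)).submatrix
          (fun i : {j // j ∈ s} => (i : Fin n)) (fun i : {j // j ∈ s} => (i : Fin n))).det)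
      ≤ (1/2 : ℝ) * Real.log
          ((1 + c • (H.submatrix (fun i : {j // j ∈ s} => (i : Fin n)) (fun i : {j // j ∈ s} => (i : Fin n))
            * H.submatrix (fun i : {j // j ∈ s} => (i : Fin n)) (fun i : {j // j ∈ s} => (i : Fin n)))).det)
        - (1/2 : ℝ) * Real.log
          ((1 + c • (colSubmatrix W s
              * (H.submatrix (fun i : {j // j ∈ s} => (i : Fin n)) (fun i : {j // j ∈ s} => (i : Fin n))
                * H.submatrix (fun i : {j // j ∈ s} => (i : Fin n)) (fun i : {j // j ∈ s} => (i : Fin n)))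
              * (colSubmatrix W s)ᵀ)).det) := by
  classical
  set cf : {j // j ∈ s} → Fin n := fun i => (i : Fin n) with hcf
  set Hsub := H.submatrix cf cf with hHsub
  set Ws := colSubmatrix W s with hWs
  set Gs := Wsᵀ * Ws with hGs
  set dd : {j // j ∈ s} → ℝ := fun i => c * H (cf i) (cf i) ^ 2 with hdd
  have hdd0 : ∀ i, 0 < dd i := fun i => mul_pos hc (pow_two_pos_of_ne_zero (hHne _))
  set Ms : Matrix {j // j ∈ s} {j // j ∈ s} ℝ := Matrix.diagonal (fun i => (dd i)⁻¹) with hMs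
  have hHdiagEq : Hsub = Matrix.diagonal (fun i => H (cf i) (cf i)) := by
    ext i j
    by_cases h : i = j
    · subst h; simp [hHsub]
    · have hne : cf i ≠ cf j := fun hh => h (Subtype.ext hh)
      simp [hHsub, Matrix.diagonal_apply_ne _ h, hHdiag _ _ hne]
  have hD2 : c • (Hsub * Hsub) = Matrix.diagonal dd := by
    rw [hHdiagEq, Matrix.diagonal_mul_diagonal]
    ext i j
    by_cases h : i = j
    · subst h
      simp only [Matrix.smul_apply, Matrix.diagonal_apply_eq, smul_eq_mul, hdd]
      ring
    · simp [Matrix.diagonal_apply_ne _ h]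
  have hH2 : (1 : Matrix {j // j ∈ s} {j // j ∈ s} ℝ) + c • (Hsub * Hsub)
      = Matrix.diagonal (fun i => 1 + dd i) := by
    rw [hD2, ← Matrix.diagonal_one, Matrix.diagonal_add]
  have hdet1 : ((1 : Matrix {j // j ∈ s} {j // j ∈ s} ℝ) + c • (Hsub * Hsub)).det
      = ∏ i, (1 + dd i) := by rw [hH2, Matrix.det_diagonal]
  have h1 : c • (Ws * (Hsub * Hsub) * Wsᵀ) = (Ws * Matrix.diagonal dd) * Wsᵀ := by
    rw [← hD2, Matrix.mul_smul, Matrix.smul_mul]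
  have hsyl : ((1 : Matrix (Fin m) (Fin m) ℝ) + c • (Ws * (Hsub * Hsub) * Wsᵀ)).det
      = ((1 : Matrix {j // j ∈ s} {j // j ∈ s} ℝ) + Gs * Matrix.diagonal dd).det := by
    rw [h1, Matrix.det_one_add_mul_comm, Matrix.mul_assoc]
  have hfact : (1 : Matrix {j // j ∈ s} {j // j ∈ s} ℝ) + Gs * Matrix.diagonal dd
      = (Gs + Ms) * Matrix.diagonal dd := by
    rw [Matrix.add_mul, hMs, Matrix.diagonal_mul_diagonal]
    have hone : (Matrix.diagonal fun i => (dd i)⁻¹ * dd i)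
        = (1 : Matrix {j // j ∈ s} {j // j ∈ s} ℝ) := by
      have hfun : (fun i => (dd i)⁻¹ * dd i) = fun _ : {j // j ∈ s} => (1:ℝ) :=
        funext fun i => inv_mul_cancel₀ (hdd0 i).ne'
      rw [hfun, Matrix.diagonal_one]
    rw [hone, add_comm]
  have hdet2 : ((1 : Matrix (Fin m) (Fin m) ℝ) + c • (Ws * (Hsub * Hsub) * Wsᵀ)).det
      = (Gs + Ms).det * ∏ i, dd i := by
    rw [hsyl, hfact, Matrix.det_mul, Matrix.det_diagonal]
  have hsub : (Wᵀ * W + Matrix.diagonal (fun i => (c * H i i ^ 2)⁻¹)).submatrix cf cf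
      = Gs + Ms := by
    ext i j
    rw [Matrix.submatrix_apply, Matrix.add_apply, Matrix.add_apply]
    have hGclaim : (Wᵀ * W) (cf i) (cf j) = Gs i j := by
      rw [hGs, Matrix.mul_apply, Matrix.mul_apply]
      apply Finset.sum_congr rfl
      intro a _
      rw [hWs]; simp [colSubmatrix, hcf]
    have hMclaim : Matrix.diagonal (fun i => (c * H i i ^ 2)⁻¹) (cf i) (cf j) = Ms i j := by
      by_cases h : i = j
      · subst h; simp [hMs, hdd]
      · have hne : cf i ≠ cf j := fun hh => h (Subtype.ext hh)
        rw [Matrix.diagonal_apply_ne _ hne,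
          show Ms i j = 0 from Matrix.diagonal_apply_ne _ h]
    rw [hGclaim, hMclaim]
  have hGsPSD : Gs.PosSemidef := by
    rw [hGs, ← Matrix.conjTranspose_eq_transpose_of_trivial]
    exact Matrix.posSemidef_conjTranspose_mul_self Ws
  have hMsPD : Ms.PosDef := Matrix.posDef_diagonal_iff.mpr (fun i => inv_pos.mpr (hdd0 i))
  have hPD : (Gs + Ms).PosDef := Matrix.PosDef.posSemidef_add hGsPSD hMsPD
  have hdetpos : 0 < (Gs + Ms).det := hPD.det_pos
  have hprodpos : 0 < ∏ i, dd i := Finset.prod_pos (fun i _ => hdd0 i)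
  constructor
  · rw [hsub]; exact hdetpos
  rw [hsub, hdet1, hdet2, Real.log_mul hdetpos.ne' hprodpos.ne']
  have hprodpos1 : 0 < ∏ i, (1 + dd i) :=
    Finset.prod_pos (fun i _ => by have := hdd0 i; linarith)
  have hmono : Real.log (∏ i, dd i) ≤ Real.log (∏ i, (1 + dd i)) :=
    Real.log_le_log hprodpos (Finset.prod_le_prod (fun i _ => (hdd0 i).le)
      (fun i _ => by linarith))
  linarith

lemma psd_det_nonneg {ι : Type*} [Fintype ι] [DecidableEq ι] {M : Matrix ι ι ℝ}
    (h : M.PosSemidef) : 0 ≤ M.det := by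
  exact h.det_nonneg

lemma exp_term_le {u : ℕ} {y : ℝ} (hy : 0 ≤ y) : y ^ u / u.factorial ≤ Real.exp y := by
  have h1 : y ^ u / u.factorial ≤ ∑ i ∈ Finset.range (u + 1), y ^ i / i.factorial := by
    apply Finset.single_le_sum (f := fun i => y ^ i / (i.factorial : ℝ))
      (fun i _ => by positivity) (Finset.self_mem_range_succ u)
  exact h1.trans (Real.sum_le_exp_of_nonneg hy (u + 1))

lemma total_sum_bound (n m k : ℕ) (hk : 1 ≤ k) (hkm : k ≤ m) (hmn : m ≤ n)
    (W : Matrix (Fin m) (Fin n) ℝ) (hW : W * Wᵀ = 1)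
    (d : Fin n → ℝ) (ε : ℝ) (hε : 0 < ε) (hd : ∀ i, 0 ≤ d i) (hdε : ∀ i, d i ≤ ε)
    {x : ℝ} (hx : 0 < x) :
    ∑ s ∈ (Finset.univ : Finset (Fin n)).powersetCard k,
        Matrix.det ((Wᵀ * W + Matrix.diagonal d).submatrix
          (fun i : {j // j ∈ s} => (i : Fin n)) (fun i : {j // j ∈ s} => (i : Fin n)))
      ≤ Real.exp (n * ε / x) * (x ^ (n - m) * (1 + x) ^ m) / x ^ (n - k) := by
  classical
  set G := Wᵀ * W with hG
  have hGpsd : G.PosSemidef := by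
    rw [hG, ← Matrix.conjTranspose_eq_transpose_of_trivial]
    exact Matrix.posSemidef_conjTranspose_mul_self W
  have hpm : ∀ t : Finset (Fin n), 0 ≤ pminor G t := fun t =>
    psd_det_nonneg (hGpsd.submatrix _)
  set P := (Finset.univ : Finset (Fin n)).powersetCard k with hP
  set f : Finset (Fin n) → ℝ := fun t => ε ^ (k - t.card) * pminor G t with hf
  -- step 1+2 : expand and bound by ε powers
  have step12 : ∑ s ∈ P, Matrix.det ((G + Matrix.diagonal d).submatrix
        (fun i : {j // j ∈ s} => (i : Fin n)) (fun i : {j // j ∈ s} => (i : Fin n)))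
      ≤ ∑ s ∈ P, ∑ t ∈ s.powerset, f t := by
    apply Finset.sum_le_sum
    intro s hs
    rw [det_submatrix_add_diagonal]
    apply Finset.sum_le_sum
    intro t ht
    have hts : t ⊆ s := Finset.mem_powerset.mp ht
    have hsk : s.card = k := (Finset.mem_powersetCard.mp hs).2
    apply mul_le_mul_of_nonneg_right _ (hpm t)
    calc ∏ i ∈ s \ t, d i ≤ ∏ i ∈ s \ t, ε :=
          Finset.prod_le_prod (fun i _ => hd i) (fun i _ => hdε i)
      _ = ε ^ (s \ t).card := Finset.prod_const ε
      _ = ε ^ (k - t.card) := by rw [Finset.card_sdiff_of_subset hts, hsk]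
  -- step 3 : swap sums
  have step3 : ∑ s ∈ P, ∑ t ∈ s.powerset, f t
      = ∑ t : Finset (Fin n), ((P.filter (fun s => t ⊆ s)).card : ℝ) * f t := by
    have h1 : ∀ s : Finset (Fin n), s.powerset = Finset.univ.filter (· ⊆ s) := by
      intro s; ext t; simp [Finset.mem_powerset]
    calc ∑ s ∈ P, ∑ t ∈ s.powerset, f t
        = ∑ s ∈ P, ∑ t : Finset (Fin n), if t ⊆ s then f t else 0 := by
          apply Finset.sum_congr rfl
          intro s _
          rw [h1 s, Finset.sum_filter]
      _ = ∑ t : Finset (Fin n), ∑ s ∈ P, if t ⊆ s then f t else 0 := Finset.sum_comm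
      _ = ∑ t : Finset (Fin n), ((P.filter (fun s => t ⊆ s)).card : ℝ) * f t := by
          apply Finset.sum_congr rfl
          intro t _
          rw [← Finset.sum_filter, Finset.sum_const, nsmul_eq_mul]
  -- step 4 : per-t bound
  have hncard : (Finset.univ : Finset (Fin n)).card = n := by
    rw [Finset.card_univ, Fintype.card_fin]
  have step4 : ∀ t : Finset (Fin n),
      ((P.filter (fun s => t ⊆ s)).card : ℝ) * f t
        ≤ Real.exp (n * ε / x) * (x ^ (n - t.card) / x ^ (n - k)) * pminor G t := by
    intro t
    by_cases hr : t.card ≤ k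
    · -- card bound
      have hcount : (P.filter (fun s => t ⊆ s)).card ≤ (n - t.card).choose (k - t.card) := by
        have hinj : (P.filter (fun s => t ⊆ s)).card
            ≤ ((Finset.univ \ t).powersetCard (k - t.card)).card := by
          apply Finset.card_le_card_of_injOn (fun s => s \ t)
          · intro s hs
            rw [Finset.mem_coe, Finset.mem_filter] at hs
            obtain ⟨hsP, hts⟩ := hs
            rw [Finset.mem_coe, Finset.mem_powersetCard]
            exact ⟨Finset.sdiff_subset_sdiff (Finset.subset_univ s) (le_refl t),
              by rw [Finset.card_sdiff_of_subset hts, (Finset.mem_powersetCard.mp hsP).2]⟩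
          · intro s hs s' hs' hss
            rw [Finset.coe_filter] at hs hs'
            obtain ⟨_, hts⟩ := hs
            obtain ⟨_, hts'⟩ := hs'
            have hss' : s \ t = s' \ t := hss
            rw [← Finset.sdiff_union_of_subset hts, ← Finset.sdiff_union_of_subset hts', hss']
        rwa [Finset.card_powersetCard, Finset.card_sdiff_of_subset (Finset.subset_univ t), hncard] at hinj
      have hchoose : (((n - t.card).choose (k - t.card) : ℕ) : ℝ)
          ≤ (n : ℝ) ^ (k - t.card) / (k - t.card).factorial := by
        calc (((n - t.card).choose (k - t.card) : ℕ) : ℝ)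
            ≤ ((n - t.card : ℕ) : ℝ) ^ (k - t.card) / (k - t.card).factorial :=
              Nat.choose_le_pow_div (k - t.card) (n - t.card)
          _ ≤ (n : ℝ) ^ (k - t.card) / (k - t.card).factorial := by
              have hle : ((n - t.card : ℕ) : ℝ) ≤ (n : ℝ) := by
                exact_mod_cast Nat.sub_le n t.card
              gcongr
      have htn : t.card ≤ n := by
        simpa using Finset.card_le_univ t
      set r := t.card with hrr
      set u := k - r with huu
      have hxu : x ^ u = x ^ (n - r) / x ^ (n - k) := by
        have hnr : n - r = (n - k) + u := by omega
        rw [hnr, pow_add]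
        field_simp
      have hcard' : ((P.filter (fun s => t ⊆ s)).card : ℝ) ≤ (n : ℝ) ^ u / u.factorial := by
        calc ((P.filter (fun s => t ⊆ s)).card : ℝ)
            ≤ (((n - r).choose u : ℕ) : ℝ) := by exact_mod_cast hcount
          _ ≤ (n : ℝ) ^ u / u.factorial := hchoose
      have hkey : (n : ℝ) ^ u / u.factorial * ε ^ u ≤ Real.exp (n * ε / x) * x ^ u := by
        have hxu0 : (0:ℝ) < x ^ u := pow_pos hx u
        have heq : (n : ℝ) ^ u / u.factorial * ε ^ u
            = x ^ u * ((n * ε / x) ^ u / u.factorial) := by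
          rw [div_pow, mul_pow]
          field_simp
        rw [heq]
        rw [mul_comm (Real.exp (n * ε / x)) (x ^ u)]
        exact mul_le_mul_of_nonneg_left (exp_term_le (by positivity)) hxu0.le
      calc ((P.filter (fun s => t ⊆ s)).card : ℝ) * f t
          = ((P.filter (fun s => t ⊆ s)).card : ℝ) * (ε ^ u * pminor G t) := rfl
        _ ≤ ((n : ℝ) ^ u / u.factorial) * (ε ^ u * pminor G t) := by
            apply mul_le_mul_of_nonneg_right hcard'
            exact mul_nonneg (by positivity) (hpm t)
        _ = ((n : ℝ) ^ u / u.factorial * ε ^ u) * pminor G t := by ring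
        _ ≤ (Real.exp (n * ε / x) * x ^ u) * pminor G t :=
            mul_le_mul_of_nonneg_right hkey (hpm t)
        _ = Real.exp (n * ε / x) * (x ^ (n - r) / x ^ (n - k)) * pminor G t := by
            rw [hxu]
    · -- t.card > k : count is zero
      have h0 : P.filter (fun s => t ⊆ s) = ∅ := by
        rw [Finset.filter_eq_empty_iff]
        intro s hs hts
        have := Finset.card_le_card hts
        rw [(Finset.mem_powersetCard.mp hs).2] at this
        omega
      rw [h0]
      simp only [Finset.card_empty, Nat.cast_zero, zero_mul]
      exact mul_nonneg (mul_nonneg (Real.exp_pos _).le (by positivity)) (hpm t)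
  -- step 5 : evaluate the full sum
  have hdetGx : ∑ t : Finset (Fin n), x ^ (n - t.card) * pminor G t
      = x ^ (n - m) * (1 + x) ^ m := by
    have h1 : (G + Matrix.diagonal (fun _ : Fin n => x)).det
        = ∑ t : Finset (Fin n), x ^ (n - t.card) * pminor G t := by
      rw [det_add_diagonal]
      apply Finset.sum_congr rfl
      intro t _
      congr 1
      rw [Finset.prod_const, Finset.card_compl, Fintype.card_fin]
    rw [← h1, show Matrix.diagonal (fun _ : Fin n => x) = x • (1 : Matrix (Fin n) (Fin n) ℝ)
      from (Matrix.smul_one_eq_diagonal x).symm]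
    exact det_gram_add_smul hmn W hW hx
  calc ∑ s ∈ P, Matrix.det ((G + Matrix.diagonal d).submatrix
        (fun i : {j // j ∈ s} => (i : Fin n)) (fun i : {j // j ∈ s} => (i : Fin n)))
      ≤ ∑ s ∈ P, ∑ t ∈ s.powerset, f t := step12
    _ = ∑ t : Finset (Fin n), ((P.filter (fun s => t ⊆ s)).card : ℝ) * f t := step3
    _ ≤ ∑ t : Finset (Fin n),
          Real.exp (n * ε / x) * (x ^ (n - t.card) / x ^ (n - k)) * pminor G t :=
        Finset.sum_le_sum (fun t _ => step4 t)
    _ = (Real.exp (n * ε / x) / x ^ (n - k))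
          * ∑ t : Finset (Fin n), x ^ (n - t.card) * pminor G t := by
        rw [Finset.mul_sum]
        apply Finset.sum_congr rfl
        intro t _
        ring
    _ = Real.exp (n * ε / x) * (x ^ (n - m) * (1 + x) ^ m) / x ^ (n - k) := by
        rw [hdetGx]; ring

/-- (Discrete-time sparse vector channel, channel-independent sampling.)
For `1 ≤ k ≤ m ≤ n`, a diagonal `n × n` real channel matrix `H` with nonzero diagonal,
power `P > 0`, `c := P/k`, `SNR_min := c · min_i H_ii²`, and any `m × n` real sampling
matrix `Q` with `Q Qᵀ` invertible, the worst-case sampled capacity loss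
`max_s L_s` over `k`-element subsets `s` is at least
`(n/2)·(H(k/n) − (m/n)·H(k/m) − 2/√SNR_min − log(n+1)/n)`. -/
theorem max_capacity_loss_ge
    (n m k : ℕ) (hk : 1 ≤ k) (hkm : k ≤ m) (hmn : m ≤ n)
    (H : Matrix (Fin n) (Fin n) ℝ)
    (hHdiag : ∀ i j, i ≠ j → H i j = 0) (hHne : ∀ i, H i i ≠ 0)
    (P : ℝ) (hP : 0 < P)
    (Q : Matrix (Fin m) (Fin n) ℝ) (hQ : IsUnit (Q * Qᵀ)) :
    letI c : ℝ := P / k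
    letI SNRmin : ℝ :=
      c * Finset.univ.inf' ⟨⟨0, by omega⟩, Finset.mem_univ _⟩ (fun i => (H i i) ^ 2)
    letI Hs : (s : Finset (Fin n)) → Matrix {j // j ∈ s} {j // j ∈ s} ℝ :=
      fun s => H.submatrix (fun i : {j // j ∈ s} => (i : Fin n)) (fun i => (i : Fin n))
    letI L : Finset (Fin n) → ℝ := fun s =>
      (1 / 2) * Real.log ((1 + c • (Hs s * Hs s)).det)
        - (1 / 2) * Real.log
            ((1 + c • (colSubmatrix (whiten Q) s * (Hs s * Hs s) *
              (colSubmatrix (whiten Q) s)ᵀ)).det)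
    ((n : ℝ) / 2) *
        (binEntropy ((k : ℝ) / n) - ((m : ℝ) / n) * binEntropy ((k : ℝ) / m)
          - 2 / Real.sqrt SNRmin - Real.log (n + 1) / n)
      ≤ (Finset.univ.powersetCard k).sup'
          (Finset.powersetCard_nonempty.mpr (by simpa using hkm.trans hmn)) L := by
  classical
  have hk0 : (0:ℝ) < (k:ℝ) := by exact_mod_cast hk
  have hc : 0 < P / (k:ℝ) := div_pos hP hk0
  have main : ∀ (h1 : (Finset.univ : Finset (Fin n)).Nonempty)
      (h2 : ((Finset.univ : Finset (Fin n)).powersetCard k).Nonempty),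
      (n:ℝ)/2 * (binEntropy ((k:ℝ)/n) - (m:ℝ)/n * binEntropy ((k:ℝ)/m)
        - 2 / Real.sqrt (P/(k:ℝ) * Finset.univ.inf' h1 (fun i => (H i i) ^ 2))
        - Real.log (n+1)/n)
      ≤ (Finset.univ.powersetCard k).sup' h2 (fun s =>
          (1/2) * Real.log ((1 + (P/(k:ℝ)) • (H.submatrix (fun i : {j // j ∈ s} => (i : Fin n)) (fun i : {j // j ∈ s} => (i : Fin n)) * H.submatrix (fun i : {j // j ∈ s} => (i : Fin n)) (fun i : {j // j ∈ s} => (i : Fin n)))).det)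
          - (1/2) * Real.log ((1 + (P/(k:ℝ)) • (colSubmatrix (whiten Q) s
              * (H.submatrix (fun i : {j // j ∈ s} => (i : Fin n)) (fun i : {j // j ∈ s} => (i : Fin n)) * H.submatrix (fun i : {j // j ∈ s} => (i : Fin n)) (fun i : {j // j ∈ s} => (i : Fin n)))
              * (colSubmatrix (whiten Q) s)ᵀ)).det)) := by
    intro h1 h2
    set W := whiten Q with hWdef
    have hW : W * Wᵀ = 1 := whiten_mul_transpose Q hQ
    set SNR : ℝ := P/(k:ℝ) * Finset.univ.inf' h1 (fun i => (H i i) ^ 2) with hSNRdef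
    have hinfpos : 0 < Finset.univ.inf' h1 (fun i : Fin n => (H i i) ^ 2) := by
      rw [Finset.lt_inf'_iff]
      intro i _
      exact pow_two_pos_of_ne_zero (hHne i)
    have hSNRpos : 0 < SNR := mul_pos hc hinfpos
    set ε : ℝ := SNR⁻¹ with hεdef
    have hε : 0 < ε := inv_pos.mpr hSNRpos
    set u : ℝ := Real.sqrt ε with hudef
    have hu0 : 0 < u := Real.sqrt_pos.mpr hε
    have hεu : u ^ 2 = ε := Real.sq_sqrt hε.le
    have h2u : 2 / Real.sqrt SNR = 2 * u := by
      rw [hudef, hεdef, Real.sqrt_inv, div_eq_mul_inv]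
    set x : ℝ := ((m:ℝ) - k)/k + u with hxdef
    have hx : 0 < x := by
      have h0 : (0:ℝ) ≤ ((m:ℝ) - k)/k := by
        apply div_nonneg _ hk0.le
        have : (k:ℝ) ≤ m := by exact_mod_cast hkm
        linarith
      rw [hxdef]; linarith
    set d : Fin n → ℝ := fun i => (P/(k:ℝ) * H i i ^ 2)⁻¹ with hddef
    have hd0 : ∀ i, 0 ≤ d i :=
      fun i => (inv_pos.mpr (mul_pos hc (pow_two_pos_of_ne_zero (hHne i)))).le
    have hdε : ∀ i, d i ≤ ε := by
      intro i
      rw [hddef, hεdef, hSNRdef]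
      apply inv_anti₀ hSNRpos
      exact mul_le_mul_of_nonneg_left (Finset.inf'_le _ (Finset.mem_univ i)) hc.le
    set detf : Finset (Fin n) → ℝ := fun s =>
      Matrix.det ((Wᵀ * W + Matrix.diagonal d).submatrix
        (fun i : {j // j ∈ s} => (i : Fin n)) (fun i : {j // j ∈ s} => (i : Fin n))) with hdetf
    have hcap := fun s : Finset (Fin n) =>
      capacity_loss_lower H hHdiag hHne hc W s
    have hdetfpos : ∀ s, 0 < detf s := fun s => (hcap s).1
    obtain ⟨s₀, hs₀P, hs₀min⟩ :=
      Finset.exists_min_image ((Finset.univ : Finset (Fin n)).powersetCard k) detf h2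
    set R : ℝ := Real.exp (n * ε / x) * (x ^ (n-m) * (1+x) ^ m) / x ^ (n-k) with hRdef
    have hR0 : 0 < R := by
      rw [hRdef]
      positivity
    have hsum_le : ((n.choose k : ℕ) : ℝ) * detf s₀ ≤ R := by
      have hPcard : ((Finset.univ : Finset (Fin n)).powersetCard k).card = n.choose k := by
        rw [Finset.card_powersetCard, Finset.card_univ, Fintype.card_fin]
      calc ((n.choose k : ℕ) : ℝ) * detf s₀
          = ∑ _s ∈ (Finset.univ : Finset (Fin n)).powersetCard k, detf s₀ := by
            rw [Finset.sum_const, hPcard, nsmul_eq_mul]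
        _ ≤ ∑ s ∈ (Finset.univ : Finset (Fin n)).powersetCard k, detf s :=
            Finset.sum_le_sum (fun s hs => hs₀min s hs)
        _ ≤ R := total_sum_bound n m k hk hkm hmn W hW d ε hε hd0 hdε hx
    have hN0 : (0:ℝ) < ((n.choose k : ℕ) : ℝ) := by
      exact_mod_cast Nat.choose_pos (hkm.trans hmn)
    have hlogdet : Real.log (detf s₀) ≤ Real.log R - Real.log (n.choose k) := by
      have hdiv : detf s₀ ≤ R / ((n.choose k : ℕ) : ℝ) := by
        rw [le_div_iff₀ hN0, mul_comm]
        exact hsum_le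
      calc Real.log (detf s₀) ≤ Real.log (R / ((n.choose k : ℕ) : ℝ)) :=
            Real.log_le_log (hdetfpos s₀) hdiv
        _ = Real.log R - Real.log (n.choose k) := Real.log_div hR0.ne' hN0.ne'
    have hlogR : Real.log R ≤ (m : ℝ) * binEntropy ((k:ℝ)/m) + 2 * n * u := by
      have hRlog : Real.log R = (n : ℝ) * ε / x + ((n - m : ℕ) : ℝ) * Real.log x
          + (m : ℝ) * Real.log (1+x) - ((n - k : ℕ) : ℝ) * Real.log x := by
        rw [hRdef, Real.log_div (by positivity) (by positivity),
          Real.log_mul (Real.exp_ne_zero _) (by positivity),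
          Real.log_exp, Real.log_mul (by positivity) (by positivity),
          Real.log_pow, Real.log_pow, Real.log_pow]
        push_cast
        ring
      have hab := analytic_bound n m k hk hkm hmn hu0
      rw [← hxdef] at hab
      rw [hRlog, ← hεu]
      linarith [hab]
    have hent := n_binEntropy_le n k hk (hkm.trans hmn)
    refine le_trans ?_ (Finset.le_sup' _ hs₀P)
    refine le_trans ?_ (hcap s₀).2
    -- numeric goal
    have hn0 : (0:ℝ) < n := lt_of_lt_of_le hk0 (by exact_mod_cast hkm.trans hmn)
    have hexpand : (n:ℝ)/2 * (binEntropy ((k:ℝ)/n) - (m:ℝ)/n * binEntropy ((k:ℝ)/m)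
          - 2 / Real.sqrt SNR - Real.log (n+1)/n)
        = (n:ℝ) * binEntropy ((k:ℝ)/n) / 2 - (m:ℝ) * binEntropy ((k:ℝ)/m) / 2
          - (n:ℝ) * u - Real.log (n+1) / 2 := by
      rw [h2u]
      field_simp
    rw [hexpand]
    linarith [hlogdet, hlogR, hent]
  exact main _ _
end

section
/- Let M be an m×n real matrix, let s be a k-element subset of {1,…,n} with complement s^c, and suppose that M Mᵀ and Ξ := (1/n)·(M Mᵀ − M_s M_sᵀ) = (1/n)·M_{s^c} (M_{s^c})ᵀ are both invertible. Then for every ε > 0, (1/n)·log det(ε·I_k + M_sᵀ (M Mᵀ)^{−1} M_s) = (1/n)·log det(ε·I_k + (1+ε)·(1/n)·M_sᵀ Ξ^{−1} M_s) + (1/n)·log det(Ξ) − (1/n)·log det((1/n)·M Mᵀ). -/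
open Matrix Finset

/-- A real positive semidefinite matrix which is a unit is positive definite. -/
lemma psd_isUnit_posDef {p : Type*} [Fintype p] [DecidableEq p]
    {A : Matrix p p ℝ} (h1 : A.PosSemidef) (h2 : IsUnit A) : A.PosDef := by
  refine Matrix.posDef_iff_dotProduct_mulVec.mpr
    ⟨h1.1, fun x hx => lt_of_le_of_ne (h1.dotProduct_mulVec_nonneg x) fun heq => hx ?_⟩
  have h0 : A *ᵥ x = 0 := (h1.dotProduct_mulVec_zero_iff x).mp heq.symm
  have hinj := Matrix.mulVec_injective_iff_isUnit.mpr h2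
  have : A *ᵥ x = A *ᵥ 0 := by simpa using h0
  simpa using hinj this

/-- `ε • 1` is positive definite for `ε > 0`. -/
lemma smul_one_posDef {p : Type*} [Fintype p] [DecidableEq p] {ε : ℝ} (hε : 0 < ε) :
    (ε • (1 : Matrix p p ℝ)).PosDef := by
  rw [Matrix.smul_one_eq_diagonal]
  exact Matrix.posDef_diagonal_iff.mpr fun _ => hε

/-- Key determinant manipulation step. -/
lemma det_step {p q : Type*} [Fintype p] [Fintype q] [DecidableEq p] [DecidableEq q]
    (B : Matrix p p ℝ) (S : Matrix p q ℝ) (c d : ℝ) (hc : c ≠ 0) (hB : IsUnit B.det) :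
    (c • (1 : Matrix q q ℝ) + d • (Sᵀ * B⁻¹ * S)).det * B.det
      = c ^ (Fintype.card q) * (B + (c⁻¹ * d) • (S * Sᵀ)).det := by
  have h1 : c • (1 : Matrix q q ℝ) + d • (Sᵀ * B⁻¹ * S)
      = c • (1 + ((c⁻¹ * d) • (Sᵀ * B⁻¹)) * S) := by
    rw [smul_add, Matrix.smul_mul, smul_smul, ← mul_assoc,
      mul_inv_cancel₀ hc, one_mul]
  have h2 : (1 + S * ((c⁻¹ * d) • (Sᵀ * B⁻¹))) * B = B + (c⁻¹ * d) • (S * Sᵀ) := by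
    rw [add_mul, one_mul, Matrix.mul_smul, Matrix.smul_mul]
    congr 2
    simp [Matrix.mul_assoc, Matrix.nonsing_inv_mul B hB]
  rw [h1, Matrix.det_smul, Matrix.det_one_add_mul_comm, mul_assoc, ← Matrix.det_mul, h2]

/-- For an `m × n` real matrix `M` and a `k`-element column subset `s`,
with `Ξ := (1/n)(M Mᵀ − M_s M_sᵀ)` and both `M Mᵀ` and `Ξ` invertible, for every `ε > 0`:
`(1/n) log det(ε I + M_sᵀ (M Mᵀ)⁻¹ M_s)
  = (1/n) log det(ε I + (1+ε)(1/n) M_sᵀ Ξ⁻¹ M_s) + (1/n) log det Ξ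
    − (1/n) log det((1/n) M Mᵀ)`. -/
theorem log_det_decoupling_identity
    (m n k : ℕ) (M : Matrix (Fin m) (Fin n) ℝ)
    (s : Finset (Fin n)) (hs : s.card = k)
    (hM : IsUnit (M * Mᵀ))
    (hΞ : IsUnit ((n : ℝ)⁻¹ • (M * Mᵀ - colSubmatrix M s * (colSubmatrix M s)ᵀ)))
    (ε : ℝ) (hε : 0 < ε) :
    letI Ξ : Matrix (Fin m) (Fin m) ℝ :=
      (n : ℝ)⁻¹ • (M * Mᵀ - colSubmatrix M s * (colSubmatrix M s)ᵀ)
    (n : ℝ)⁻¹ * Real.log ((ε • (1 : Matrix {j // j ∈ s} {j // j ∈ s} ℝ) +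
        (colSubmatrix M s)ᵀ * (M * Mᵀ)⁻¹ * colSubmatrix M s).det)
      = (n : ℝ)⁻¹ * Real.log ((ε • (1 : Matrix {j // j ∈ s} {j // j ∈ s} ℝ) +
            (1 + ε) • ((n : ℝ)⁻¹ • ((colSubmatrix M s)ᵀ * Ξ⁻¹ * colSubmatrix M s))).det)
        + (n : ℝ)⁻¹ * Real.log Ξ.det
        - (n : ℝ)⁻¹ * Real.log (((n : ℝ)⁻¹ • (M * Mᵀ)).det) := by
  rcases Nat.eq_zero_or_pos n with hn | hn
  · subst hn; simp
  have hn0 : (n : ℝ) ≠ 0 := Nat.cast_ne_zero.mpr hn.ne'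
  set S := colSubmatrix M s with hSdef
  set A := M * Mᵀ with hAdef
  set Ξm := (n : ℝ)⁻¹ • (A - S * Sᵀ) with hΞm
  set κ := Fintype.card {j // j ∈ s} with hκ
  -- determinant nonvanishing of A and Ξ
  have hdA : IsUnit A.det := (Matrix.isUnit_iff_isUnit_det A).mp hM
  have hdA0 : A.det ≠ 0 := hdA.ne_zero
  have hdΞ : IsUnit Ξm.det := (Matrix.isUnit_iff_isUnit_det Ξm).mp (hΞm ▸ hΞ)
  have hdΞ0 : Ξm.det ≠ 0 := hdΞ.ne_zero
  -- positive definiteness facts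
  have hApsd : A.PosSemidef := by
    have := Matrix.posSemidef_self_mul_conjTranspose M
    rwa [Matrix.conjTranspose_eq_transpose_of_trivial] at this
  have hApd : A.PosDef := psd_isUnit_posDef hApsd hM
  have hAinvpd : A⁻¹.PosDef := hApd.inv
  have hLpd : (ε • (1 : Matrix {j // j ∈ s} {j // j ∈ s} ℝ) + Sᵀ * A⁻¹ * S).PosDef := by
    refine (smul_one_posDef hε).add_posSemidef ?_
    have := hAinvpd.posSemidef.conjTranspose_mul_mul_same S
    rwa [Matrix.conjTranspose_eq_transpose_of_trivial] at this
  have hdL0 : (ε • (1 : Matrix {j // j ∈ s} {j // j ∈ s} ℝ) + Sᵀ * A⁻¹ * S).det ≠ 0 :=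
    hLpd.det_pos.ne'
  -- first determinant identity
  have eq1 : (ε • (1 : Matrix {j // j ∈ s} {j // j ∈ s} ℝ) + Sᵀ * A⁻¹ * S).det * A.det
      = ε ^ κ * (A + (ε⁻¹ * 1) • (S * Sᵀ)).det := by
    have := det_step A S ε 1 hε.ne' hdA
    rwa [one_smul] at this
  -- second determinant identity
  have eq2 : (ε • (1 : Matrix {j // j ∈ s} {j // j ∈ s} ℝ) +
        ((1 + ε) * (n : ℝ)⁻¹) • (Sᵀ * Ξm⁻¹ * S)).det * Ξm.det
      = ε ^ κ * (Ξm + (ε⁻¹ * ((1 + ε) * (n : ℝ)⁻¹)) • (S * Sᵀ)).det :=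
    det_step Ξm S ε ((1 + ε) * (n : ℝ)⁻¹) hε.ne' hdΞ
  -- the bridge between the two shifted matrices
  have hbridge : A + (ε⁻¹ * 1) • (S * Sᵀ)
      = (n : ℝ) • (Ξm + (ε⁻¹ * ((1 + ε) * (n : ℝ)⁻¹)) • (S * Sᵀ)) := by
    rw [hΞm, smul_add, smul_smul, smul_smul, mul_inv_cancel₀ hn0, one_smul]
    have hco : (n : ℝ) * (ε⁻¹ * ((1 + ε) * (n : ℝ)⁻¹)) = ε⁻¹ * 1 + 1 := by
      field_simp
    rw [hco, add_smul, one_smul]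
    abel
  have hdetbridge : (A + (ε⁻¹ * 1) • (S * Sᵀ)).det
      = (n : ℝ) ^ m * (Ξm + (ε⁻¹ * ((1 + ε) * (n : ℝ)⁻¹)) • (S * Sᵀ)).det := by
    rw [hbridge, Matrix.det_smul, Fintype.card_fin]
  have hpow : ((n : ℝ)⁻¹) ^ m * (n : ℝ) ^ m = 1 := by
    rw [← mul_pow, inv_mul_cancel₀ hn0, one_pow]
  -- nonvanishing of the remaining determinants
  set D := (Ξm + (ε⁻¹ * ((1 + ε) * (n : ℝ)⁻¹)) • (S * Sᵀ)).det with hD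
  have hεκ : ε ^ κ ≠ 0 := pow_ne_zero _ hε.ne'
  have hD0 : D ≠ 0 := by
    intro h
    exact (mul_ne_zero hdL0 hdA0) (by rw [eq1, hdetbridge, h, mul_zero, mul_zero])
  have hdR0 : (ε • (1 : Matrix {j // j ∈ s} {j // j ∈ s} ℝ) +
      ((1 + ε) * (n : ℝ)⁻¹) • (Sᵀ * Ξm⁻¹ * S)).det ≠ 0 := by
    intro h
    rw [h, zero_mul] at eq2
    exact (mul_ne_zero hεκ hD0) eq2.symm
  have hdA'0 : (((n : ℝ)⁻¹ • A).det) ≠ 0 := by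
    rw [Matrix.det_smul, Fintype.card_fin]
    exact mul_ne_zero (pow_ne_zero _ (inv_ne_zero hn0)) hdA0
  -- the key product identity
  have key : (ε • (1 : Matrix {j // j ∈ s} {j // j ∈ s} ℝ) + Sᵀ * A⁻¹ * S).det
        * (((n : ℝ)⁻¹ • A).det)
      = (ε • (1 : Matrix {j // j ∈ s} {j // j ∈ s} ℝ) +
          ((1 + ε) * (n : ℝ)⁻¹) • (Sᵀ * Ξm⁻¹ * S)).det * Ξm.det := by
    rw [Matrix.det_smul, Fintype.card_fin]
    rw [hdetbridge] at eq1
    linear_combination ((n : ℝ)⁻¹) ^ m * eq1 - eq2 + ε ^ κ * D * hpow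
  -- convert goal to match
  have hsm : (1 + ε) • ((n : ℝ)⁻¹ • (Sᵀ * Ξm⁻¹ * S))
      = ((1 + ε) * (n : ℝ)⁻¹) • (Sᵀ * Ξm⁻¹ * S) := smul_smul _ _ _
  rw [hsm]
  have hlog : Real.log ((ε • (1 : Matrix {j // j ∈ s} {j // j ∈ s} ℝ) + Sᵀ * A⁻¹ * S).det)
        + Real.log (((n : ℝ)⁻¹ • A).det)
      = Real.log ((ε • (1 : Matrix {j // j ∈ s} {j // j ∈ s} ℝ) +
          ((1 + ε) * (n : ℝ)⁻¹) • (Sᵀ * Ξm⁻¹ * S)).det) + Real.log (Ξm.det) := by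
    rw [← Real.log_mul hdL0 hdA'0, ← Real.log_mul hdR0 hdΞ0, key]
  linear_combination (n : ℝ)⁻¹ * hlog
end
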